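/- arXiv:2010.00034 — 2 statements merged into one kernel-verified Lean document; each statement's English description precedes it below -/
import Mathlib

section
/- Let q_p be the quadratic form q_p(v) = (1/ε²)∫_{-1}^{1}|v'(t)|² dt + ∫_{-1}^{1} (p²/h_ε(t)² + Y_ε⁰(t)) |v(t)|² dt on H¹₀(-1,1). Then for every normalized v ∈ H¹₀(-1,1), q_p(v) ≥ p²/(1+γ²ε²) - ε²γ⁴. -/
/-- Lower bound for the fiber quadratic form: for every normalized
`v ∈ H¹₀(-1,1)` (formalized as `C¹` with Dirichlet boundary conditions),
`q_p(v) ≥ p²/(1+γ²ε²) - ε²γ⁴`. -/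
theorem stmt_6 (γ ε p : ℝ) (hγ : 0 < γ) (hε : 0 < ε)
    (v : ℝ → ℝ) (hv : ContDiff ℝ 1 v) (hv₁ : v (-1) = 0) (hv₂ : v 1 = 0)
    (hnorm : (∫ t in (-1 : ℝ)..1, v t ^ 2) = 1) :
    (1 / ε ^ 2) * (∫ t in (-1 : ℝ)..1, deriv v t ^ 2)
      + (∫ t in (-1 : ℝ)..1,
          (p ^ 2 / (1 + γ ^ 2 * ε ^ 2 * t ^ 2)
            + (-(3 * γ ^ 4 * ε ^ 2 * t ^ 2) / (4 * (1 + γ ^ 2 * ε ^ 2 * t ^ 2) ^ 2)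
                + γ ^ 2 / (2 * (1 + γ ^ 2 * ε ^ 2 * t ^ 2)))) * v t ^ 2)
      ≥ p ^ 2 / (1 + γ ^ 2 * ε ^ 2) - ε ^ 2 * γ ^ 4 := by
  set c : ℝ := p ^ 2 / (1 + γ ^ 2 * ε ^ 2) - ε ^ 2 * γ ^ 4 with hc
  -- kinetic term is nonnegative
  have hkin : 0 ≤ (1 / ε ^ 2) * (∫ t in (-1 : ℝ)..1, deriv v t ^ 2) := by
    apply mul_nonneg (by positivity)
    apply intervalIntegral.integral_nonneg (by norm_num)
    intro t _; positivity
  -- continuity of the integrand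
  have hcv : Continuous v := hv.continuous
  have hW : Continuous fun t : ℝ =>
      (p ^ 2 / (1 + γ ^ 2 * ε ^ 2 * t ^ 2)
        + (-(3 * γ ^ 4 * ε ^ 2 * t ^ 2) / (4 * (1 + γ ^ 2 * ε ^ 2 * t ^ 2) ^ 2)
            + γ ^ 2 / (2 * (1 + γ ^ 2 * ε ^ 2 * t ^ 2)))) * v t ^ 2 := by
    have hd : ∀ t : ℝ, (0:ℝ) < 1 + γ ^ 2 * ε ^ 2 * t ^ 2 := fun t => by positivity
    apply Continuous.mul _ (by continuity)
    apply Continuous.add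
    · exact continuous_const.div (by continuity) fun t => (hd t).ne'
    · apply Continuous.add
      · exact Continuous.div (by continuity) (by continuity) fun t => by
          have := hd t; positivity
      · exact continuous_const.div (by continuity) fun t => by
          have := hd t; positivity
  -- pointwise lower bound of the potential on [-1,1]
  have hpoint : ∀ t ∈ Set.Icc (-1:ℝ) 1,
      c * v t ^ 2 ≤
      (p ^ 2 / (1 + γ ^ 2 * ε ^ 2 * t ^ 2)
        + (-(3 * γ ^ 4 * ε ^ 2 * t ^ 2) / (4 * (1 + γ ^ 2 * ε ^ 2 * t ^ 2) ^ 2)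
            + γ ^ 2 / (2 * (1 + γ ^ 2 * ε ^ 2 * t ^ 2)))) * v t ^ 2 := by
    intro t ht
    have ht2 : t ^ 2 ≤ 1 := by
      rcases ht with ⟨h1, h2⟩; nlinarith
    have hd : (0:ℝ) < 1 + γ ^ 2 * ε ^ 2 * t ^ 2 := by positivity
    apply mul_le_mul_of_nonneg_right _ (sq_nonneg _)
    have h1 : p ^ 2 / (1 + γ ^ 2 * ε ^ 2) ≤ p ^ 2 / (1 + γ ^ 2 * ε ^ 2 * t ^ 2) := by
      apply div_le_div_of_nonneg_left (sq_nonneg p) hd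
      nlinarith [sq_nonneg γ, sq_nonneg ε, mul_pos (mul_pos hγ hγ) (mul_pos hε hε)]
    have h2 : -(ε ^ 2 * γ ^ 4) ≤
        -(3 * γ ^ 4 * ε ^ 2 * t ^ 2) / (4 * (1 + γ ^ 2 * ε ^ 2 * t ^ 2) ^ 2) := by
      rw [le_div_iff₀ (by positivity), neg_mul]
      have hx : (0:ℝ) ≤ γ ^ 2 * ε ^ 2 * t ^ 2 := by positivity
      have hd1 : (1:ℝ) ≤ (1 + γ ^ 2 * ε ^ 2 * t ^ 2) ^ 2 := by nlinarith
      have he : (0:ℝ) ≤ ε ^ 2 * γ ^ 4 := by positivity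
      nlinarith [mul_le_mul_of_nonneg_left ht2 he, mul_le_mul_of_nonneg_left hd1 he,
        mul_nonneg he (le_trans zero_le_one hd1)]
    have h3 : (0:ℝ) ≤ γ ^ 2 / (2 * (1 + γ ^ 2 * ε ^ 2 * t ^ 2)) := by positivity
    rw [hc]
    linarith
  -- integral comparison
  have hmono :
      (∫ t in (-1 : ℝ)..1, c * v t ^ 2) ≤
      (∫ t in (-1 : ℝ)..1,
          (p ^ 2 / (1 + γ ^ 2 * ε ^ 2 * t ^ 2)
            + (-(3 * γ ^ 4 * ε ^ 2 * t ^ 2) / (4 * (1 + γ ^ 2 * ε ^ 2 * t ^ 2) ^ 2)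
                + γ ^ 2 / (2 * (1 + γ ^ 2 * ε ^ 2 * t ^ 2)))) * v t ^ 2) := by
    apply intervalIntegral.integral_mono_on (by norm_num)
    · exact ((continuous_const.mul (hcv.pow 2)).intervalIntegrable _ _)
    · exact hW.intervalIntegrable _ _
    · exact hpoint
  have hconst : (∫ t in (-1 : ℝ)..1, c * v t ^ 2) = c := by
    rw [intervalIntegral.integral_const_mul, hnorm, mul_one]
  rw [hconst] at hmono
  linarith
end

section
/- Under the condition Y_ε⁰ > 0 on (-1,1), the first min-max eigenvalue λ_{ε,1}(0) of D_ε(0) satisfies (π/2)² ≤ ε² λ_{ε,1}(0) ≤ (π/2)² + Kε² for some constant K > 0 independent of ε; in particular ε² λ_{ε,1}(0) → (π/2)² as ε → 0. -/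
/-- The effective potential `Y_ε⁰`. -/
noncomputable def Ypot (γ ε t : ℝ) : ℝ :=
  -(3 * γ ^ 4 * ε ^ 2 * t ^ 2) / (4 * (1 + γ ^ 2 * ε ^ 2 * t ^ 2) ^ 2)
    + γ ^ 2 / (2 * (1 + γ ^ 2 * ε ^ 2 * t ^ 2))

/-- The first eigenvalue `λ_{ε,1}(0)` of `D_ε(0)`, defined as the infimum of
the quadratic form `ε⁻²∫|v'|² + ∫Y_ε⁰|v|²` over normalized `v ∈ H¹₀(-1,1)`
(formalized as normalized `C¹` functions with Dirichlet boundary values). -/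
noncomputable def lamOne (γ ε : ℝ) : ℝ :=
  sInf {r : ℝ | ∃ v : ℝ → ℝ, ContDiff ℝ 1 v ∧ v (-1) = 0 ∧ v 1 = 0 ∧
    (∫ t in (-1 : ℝ)..1, v t ^ 2) = 1 ∧
    r = (1 / ε ^ 2) * (∫ t in (-1 : ℝ)..1, deriv v t ^ 2)
      + ∫ t in (-1 : ℝ)..1, Ypot γ ε t * v t ^ 2}

open Real MeasureTheory intervalIntegral Set Filter

namespace Stmt10Aux

lemma ypot_eq (γ ε t : ℝ) :
    Ypot γ ε t = γ ^ 2 * (2 - γ ^ 2 * ε ^ 2 * t ^ 2)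
      / (4 * (1 + γ ^ 2 * ε ^ 2 * t ^ 2) ^ 2) := by
  have h : (1 + γ ^ 2 * ε ^ 2 * t ^ 2) ≠ 0 := by positivity
  unfold Ypot
  field_simp
  ring

lemma ypot_le (γ ε t : ℝ) : Ypot γ ε t ≤ γ ^ 2 / 2 := by
  have h : (0:ℝ) < 1 + γ ^ 2 * ε ^ 2 * t ^ 2 := by positivity
  unfold Ypot
  have h1 : -(3 * γ ^ 4 * ε ^ 2 * t ^ 2) / (4 * (1 + γ ^ 2 * ε ^ 2 * t ^ 2) ^ 2) ≤ 0 := by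
    apply div_nonpos_of_nonpos_of_nonneg
    · have : (0:ℝ) ≤ 3 * γ ^ 4 * ε ^ 2 * t ^ 2 := by positivity
      linarith
    · positivity
  have h2 : γ ^ 2 / (2 * (1 + γ ^ 2 * ε ^ 2 * t ^ 2)) ≤ γ ^ 2 / 2 := by
    gcongr <;> nlinarith [sq_nonneg γ, sq_nonneg (γ * ε * t)]
  linarith

lemma ypot_cont (γ ε : ℝ) : Continuous fun t => Ypot γ ε t := by
  unfold Ypot
  apply Continuous.add
  · exact Continuous.div (by continuity) (by continuity)
      (fun t => by positivity)
  · exact Continuous.div (by continuity) (by continuity)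
      (fun t => by positivity)

lemma ypot_pos_of_small (γ : ℝ) (hγ : 0 < γ) (ε : ℝ) (hε : 0 < ε) (hlt : ε < 1 / γ) :
    ∀ t ∈ Ioo (-1 : ℝ) 1, 0 < Ypot γ ε t := by
  intro t ht
  rw [ypot_eq]
  have ht2 : t ^ 2 ≤ 1 := by nlinarith [ht.1, ht.2]
  have hεγ : ε * γ < 1 := (lt_div_iff₀ hγ).mp hlt
  have hs : γ ^ 2 * ε ^ 2 * t ^ 2 < 2 := by nlinarith [mul_pos hγ hε, sq_nonneg (γ * ε)]
  apply div_pos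
  · nlinarith [sq_nonneg γ, pow_pos hγ 2]
  · positivity

set_option maxHeartbeats 1000000 in
/-- Sharp Poincaré (Wirtinger) inequality on `(-1,1)` with Dirichlet conditions. -/
lemma wirtinger {v : ℝ → ℝ} (hv : ContDiff ℝ 1 v) (hm : v (-1) = 0) (hp : v 1 = 0) :
    (π / 2) ^ 2 * ∫ t in (-1 : ℝ)..1, v t ^ 2 ≤ ∫ t in (-1 : ℝ)..1, deriv v t ^ 2 := by
  have hvc : Continuous v := hv.continuous
  have hvd : Continuous (deriv v) := hv.continuous_deriv le_rfl
  have hdv : ∀ t, HasDerivAt v (deriv v t) t := fun t =>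
    ((hv.differentiable one_ne_zero) t).hasDerivAt
  set q : ℝ → ℝ := fun t => -(π / 2) * Real.sin (π * t / 2) / Real.cos (π * t / 2) with hqdef
  set G : ℝ → ℝ := fun t => v t ^ 2 * q t with hGdef
  set f : ℝ → ℝ := fun t => deriv v t ^ 2 - (π / 2) ^ 2 * v t ^ 2 with hfdef
  set g : ℝ → ℝ := fun t =>
    2 * v t * deriv v t * q t - v t ^ 2 * ((π / 2) ^ 2 + q t ^ 2) with hgdef
  have hf : Continuous f := by
    apply Continuous.sub (hvd.pow 2)
    exact continuous_const.mul (hvc.pow 2)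
  have hcpos : ∀ t ∈ Ioo (-1 : ℝ) 1, 0 < Real.cos (π * t / 2) := by
    intro t ht
    apply Real.cos_pos_of_mem_Ioo
    constructor
    · nlinarith [Real.pi_pos, ht.1]
    · nlinarith [Real.pi_pos, ht.2]
  have hlin : ∀ t : ℝ, HasDerivAt (fun t : ℝ => π * t / 2) (π / 2) t := by
    intro t
    simpa using ((hasDerivAt_id t).const_mul π).div_const 2
  have hq : ∀ t ∈ Ioo (-1 : ℝ) 1, HasDerivAt q (-((π / 2) ^ 2 + q t ^ 2)) t := by
    intro t ht
    have hc := (hcpos t ht).ne'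
    have hs : HasDerivAt (fun t => Real.sin (π * t / 2)) (Real.cos (π * t / 2) * (π / 2)) t :=
      (hlin t).sin
    have hcc : HasDerivAt (fun t => Real.cos (π * t / 2)) (-Real.sin (π * t / 2) * (π / 2)) t :=
      (hlin t).cos
    have hn : HasDerivAt (fun t => -(π / 2) * Real.sin (π * t / 2))
        (-(π / 2) * (Real.cos (π * t / 2) * (π / 2))) t := hs.const_mul _
    have hdiv := hn.div hcc hc
    refine hdiv.congr_deriv ?_
    have hpy := Real.sin_sq_add_cos_sq (π * t / 2)
    simp only [hqdef]
    field_simp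
    nlinarith [hpy]
  have hG : ∀ t ∈ Ioo (-1 : ℝ) 1, HasDerivAt G (g t) t := by
    intro t ht
    have h1 := ((hdv t).pow 2).mul (hq t ht)
    refine h1.congr_deriv ?_
    simp only [hgdef, Pi.pow_apply]
    ring
  have hqcont : ContinuousOn q (Ioo (-1 : ℝ) 1) := by
    apply ContinuousOn.div (by fun_prop) (by fun_prop)
    intro t ht
    exact (hcpos t ht).ne'
  have hgcont : ContinuousOn g (Ioo (-1 : ℝ) 1) := by
    apply ContinuousOn.sub
    · exact (((continuous_const.mul hvc).mul hvd).continuousOn).mul hqcont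
    · exact ((hvc.pow 2).continuousOn).mul (continuousOn_const.add (hqcont.pow 2))
  -- key inequality on subintervals
  have key : ∀ a ∈ Ioo (0 : ℝ) 1, G a - G (-a) ≤ ∫ t in (-a)..a, f t := by
    intro a ha
    have hab : (-a : ℝ) ≤ a := by linarith [ha.1]
    have hsub : uIcc (-a) a ⊆ Ioo (-1 : ℝ) 1 := by
      rw [uIcc_of_le hab]
      intro x hx
      exact ⟨by linarith [hx.1, ha.2], by linarith [hx.2, ha.2]⟩
    have hgi : IntervalIntegrable g volume (-a) a :=
      (hgcont.mono hsub).intervalIntegrable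
    have hftc : ∫ t in (-a)..a, g t = G a - G (-a) :=
      integral_eq_sub_of_hasDerivAt (fun t ht => hG t (hsub ht)) hgi
    have hfi : IntervalIntegrable f volume (-a) a := hf.intervalIntegrable _ _
    have hnn : 0 ≤ ∫ t in (-a)..a, (f t - g t) := by
      apply intervalIntegral.integral_nonneg hab
      intro u hu
      have hu' : u ∈ Ioo (-1 : ℝ) 1 := hsub (by rw [uIcc_of_le hab]; exact hu)
      have hid : f u - g u = (deriv v u - v u * q u) ^ 2 := by
        simp only [hfdef, hgdef]
        ring
      rw [hid]
      positivity
    rw [intervalIntegral.integral_sub hfi hgi] at hnn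
    rw [hftc] at hnn
    linarith
  -- uniform bound on deriv v
  obtain ⟨M, hM⟩ : ∃ M, ∀ t ∈ Icc (-1 : ℝ) 1, ‖deriv v t‖ ≤ M :=
    isCompact_Icc.exists_bound_of_continuousOn hvd.continuousOn
  have hM0 : 0 ≤ M := le_trans (norm_nonneg _) (hM 0 ⟨by norm_num, by norm_num⟩)
  have hmvt : ∀ x ∈ Icc (-1 : ℝ) 1, ∀ y ∈ Icc (-1 : ℝ) 1, ‖v y - v x‖ ≤ M * ‖y - x‖ := by
    intro x hx y hy
    exact (convex_Icc _ _).norm_image_sub_le_of_norm_deriv_le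
      (fun z _ => (hdv z).differentiableAt) hM hx hy
  -- bound on |G a|, |G (-a)| near 1
  have hcos_ge : ∀ a ∈ Icc (0 : ℝ) 1, 1 - a ≤ Real.cos (π * a / 2) := by
    intro a ha
    have h := Real.one_sub_mul_le_cos (x := π * a / 2)
      (by nlinarith [Real.pi_pos, ha.1]) (by nlinarith [Real.pi_pos, ha.2])
    have h2 : 2 / π * (π * a / 2) = a := by
      field_simp
    rw [h2] at h
    exact h
  have hGbound : ∀ a ∈ Ioo (0 : ℝ) 1, |G a - G (-a)| ≤ π * M ^ 2 * (1 - a) := by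
    intro a ha
    have ha1 : a ∈ Icc (-1 : ℝ) 1 := ⟨by linarith [ha.1], ha.2.le⟩
    have ha2 : (-a) ∈ Icc (-1 : ℝ) 1 := ⟨by linarith [ha.2], by linarith [ha.1]⟩
    have hcpos' : 0 < Real.cos (π * a / 2) := hcpos a ⟨by linarith [ha.1], ha.2⟩
    have hcge : 1 - a ≤ Real.cos (π * a / 2) := hcos_ge a ⟨ha.1.le, ha.2.le⟩
    have hva : |v a| ≤ M * (1 - a) := by
      have h' := hmvt 1 ⟨by norm_num, le_rfl⟩ a ha1
      rw [hp, sub_zero] at h'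
      have h3 : ‖a - 1‖ = 1 - a := by
        rw [Real.norm_eq_abs, abs_of_nonpos (by linarith [ha.2] : a - 1 ≤ 0)]; ring
      rw [h3] at h'
      simpa [Real.norm_eq_abs] using h'
    have hvma : |v (-a)| ≤ M * (1 - a) := by
      have h' := hmvt (-1) ⟨le_rfl, by norm_num⟩ (-a) ha2
      rw [hm, sub_zero] at h'
      have h3 : ‖(-a : ℝ) - -1‖ = 1 - a := by
        rw [Real.norm_eq_abs, abs_of_nonneg (by linarith [ha.2] : (0:ℝ) ≤ -a - -1)]; ring
      rw [h3] at h'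
      simpa [Real.norm_eq_abs] using h'
    have hGone : ∀ b : ℝ, b ∈ Icc (-1:ℝ) 1 → |v b| ≤ M * (1 - a) →
        Real.cos (π * b / 2) = Real.cos (π * a / 2) → |G b| ≤ (π / 2) * M ^ 2 * (1 - a) := by
      intro b hb hvb hcb
      have h0c : 0 < Real.cos (π * b / 2) := hcb ▸ hcpos'
      have habs : |G b| = v b ^ 2 * (π / 2 * |Real.sin (π * b / 2)| / Real.cos (π * b / 2)) := by
        simp only [hGdef, hqdef]
        rw [abs_mul, abs_of_nonneg (sq_nonneg (v b)), abs_div, abs_mul, abs_neg,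
          abs_of_pos (by positivity : (0:ℝ) < π / 2), abs_of_pos h0c]
      rw [habs, hcb]
      have hsle : |Real.sin (π * b / 2)| ≤ 1 :=
        abs_le.mpr ⟨Real.neg_one_le_sin _, Real.sin_le_one _⟩
      have hv2 : v b ^ 2 ≤ (M * (1 - a)) ^ 2 := by
        rw [← sq_abs]
        apply pow_le_pow_left₀ (abs_nonneg _) hvb
      have hfrac : (π / 2) * |Real.sin (π * b / 2)| / Real.cos (π * a / 2)
          ≤ (π / 2) / (1 - a) := by
        apply div_le_div₀ (by positivity)
          (by nlinarith [Real.pi_pos]) (by linarith [ha.2]) hcge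
      calc v b ^ 2 * ((π / 2) * |Real.sin (π * b / 2)| / Real.cos (π * a / 2))
          ≤ (M * (1 - a)) ^ 2 * ((π / 2) / (1 - a)) := by
            apply mul_le_mul hv2 hfrac (by positivity) (by positivity)
        _ = (π / 2) * M ^ 2 * (1 - a) := by
            have h1a : (1 - a) ≠ 0 := by
              have : a < 1 := ha.2
              intro hcon; nlinarith
            field_simp
    have hGa := hGone a ha1 hva rfl
    have hGma := hGone (-a) ha2 hvma (by rw [show π * (-a) / 2 = -(π * a / 2) by ring, Real.cos_neg])
    have htri : |G a - G (-a)| ≤ |G a| + |G (-a)| := by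
      calc |G a - G (-a)| = |G a + -G (-a)| := by rw [sub_eq_add_neg]
        _ ≤ |G a| + |-G (-a)| := abs_add_le _ _
        _ = |G a| + |G (-a)| := by rw [abs_neg]
    calc |G a - G (-a)| ≤ |G a| + |G (-a)| := htri
      _ ≤ (π / 2) * M ^ 2 * (1 - a) + (π / 2) * M ^ 2 * (1 - a) := add_le_add hGa hGma
      _ = π * M ^ 2 * (1 - a) := by ring
  -- limits
  have hGlim : Tendsto (fun a => G a - G (-a)) (nhdsWithin 1 (Iio 1)) (nhds 0) := by
    apply squeeze_zero_norm'
    · filter_upwards [Ioo_mem_nhdsLT_of_mem (⟨by norm_num, le_rfl⟩ : (1:ℝ) ∈ Ioc 0 1)]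
        with a ha
      exact hGbound a ha
    · have hcont : Continuous fun a : ℝ => π * M ^ 2 * (1 - a) :=
        continuous_const.mul (continuous_const.sub continuous_id)
      have := (hcont.tendsto 1).mono_left (nhdsWithin_le_nhds (s := Iio (1:ℝ)))
      simpa using this
  have hInt : ∀ a b : ℝ, IntervalIntegrable f volume a b := fun a b =>
    hf.intervalIntegrable a b
  have hFlim : Tendsto (fun a => ∫ t in (-a)..a, f t) (nhdsWithin 1 (Iio 1))
      (nhds (∫ t in (-1 : ℝ)..1, f t)) := by
    have hH : Continuous fun x => ∫ t in (-1 : ℝ)..x, f t :=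
      intervalIntegral.continuous_primitive hInt (-1)
    have hc : Continuous fun a : ℝ =>
        (∫ t in (-1 : ℝ)..a, f t) - ∫ t in (-1 : ℝ)..(-a), f t :=
      hH.sub (hH.comp continuous_neg)
    have h2 := (hc.tendsto 1).mono_left (nhdsWithin_le_nhds
      (s := Iio (1:ℝ)))
    have h3 : ((∫ t in (-1 : ℝ)..1, f t) - ∫ t in (-1 : ℝ)..(-1:ℝ), f t)
        = ∫ t in (-1 : ℝ)..1, f t := by simp
    rw [h3] at h2
    apply h2.congr
    intro a
    exact integral_interval_sub_left (hInt _ _) (hInt _ _)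
  have h0 : (0 : ℝ) ≤ ∫ t in (-1 : ℝ)..1, f t := by
    have hev : ∀ᶠ a in nhdsWithin 1 (Iio (1:ℝ)),
        G a - G (-a) ≤ ∫ t in (-a)..a, f t := by
      filter_upwards [Ioo_mem_nhdsLT_of_mem (⟨by norm_num, le_rfl⟩ : (1:ℝ) ∈ Ioc 0 1)]
        with a ha
      exact key a ha
    exact le_of_tendsto_of_tendsto hGlim hFlim hev
  have hsplit : (∫ t in (-1 : ℝ)..1, f t)
      = (∫ t in (-1 : ℝ)..1, deriv v t ^ 2) - (π / 2) ^ 2 * ∫ t in (-1 : ℝ)..1, v t ^ 2 := by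
    rw [hfdef]
    rw [intervalIntegral.integral_sub (f := fun t => deriv v t ^ 2) (g := fun t => (π / 2) ^ 2 * v t ^ 2) ((hvd.pow 2).intervalIntegrable _ _)
      ((continuous_const.mul (hvc.pow 2)).intervalIntegrable _ _)]
    rw [intervalIntegral.integral_const_mul]
  linarith [hsplit ▸ h0]

/-- The test function `cos (π t / 2)`. -/
noncomputable def v0 : ℝ → ℝ := fun t => Real.cos (π * t / 2)

lemma hlin (t : ℝ) : HasDerivAt (fun t : ℝ => π * t / 2) (π / 2) t := by
  simpa using ((hasDerivAt_id t).const_mul π).div_const 2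

lemma v0_contDiff : ContDiff ℝ 1 v0 :=
  Real.contDiff_cos.comp ((contDiff_const.mul contDiff_id).div_const 2)

lemma v0_deriv : deriv v0 = fun t => -Real.sin (π * t / 2) * (π / 2) := by
  funext t
  exact ((hlin t).cos).deriv

lemma integral_v0_sq : (∫ t in (-1 : ℝ)..1, v0 t ^ 2) = 1 := by
  have hA : ∀ t : ℝ, HasDerivAt (fun t : ℝ => t / 2 + Real.sin (π * t) / (2 * π))
      (v0 t ^ 2) t := by
    intro t
    have h1 : HasDerivAt (fun t : ℝ => π * t) π t := by
      simpa using (hasDerivAt_id t).const_mul π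
    have h2 := ((hasDerivAt_id t).div_const 2).add ((h1.sin).div_const (2 * π))
    refine h2.congr_deriv ?_
    have harg : π * t = 2 * (π * t / 2) := by ring
    have hsq := Real.cos_sq (π * t / 2)
    rw [← harg] at hsq
    have hdiv : Real.cos (π * t) * π / (2 * π) = Real.cos (π * t) / 2 :=
      mul_div_mul_right _ _ Real.pi_ne_zero
    simp only [v0]
    rw [hdiv, hsq]
  have hftc := intervalIntegral.integral_eq_sub_of_hasDerivAt
    (f := fun t : ℝ => t / 2 + Real.sin (π * t) / (2 * π))
    (a := -1) (b := 1)
    (fun t _ => hA t)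
    (((v0_contDiff.continuous).pow 2).intervalIntegrable _ _)
  rw [hftc]
  norm_num [Real.sin_pi, Real.sin_neg]

lemma integral_v0_deriv_sq : (∫ t in (-1 : ℝ)..1, deriv v0 t ^ 2) = (π / 2) ^ 2 := by
  rw [v0_deriv]
  have hB : ∀ t : ℝ, HasDerivAt
      (fun t : ℝ => (π / 2) ^ 2 * (t / 2 - Real.sin (π * t) / (2 * π)))
      ((-Real.sin (π * t / 2) * (π / 2)) ^ 2) t := by
    intro t
    have h1 : HasDerivAt (fun t : ℝ => π * t) π t := by
      simpa using (hasDerivAt_id t).const_mul π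
    have h2 := (((hasDerivAt_id t).div_const 2).sub ((h1.sin).div_const (2 * π))).const_mul
      ((π / 2) ^ 2)
    refine h2.congr_deriv ?_
    have harg : π * t = 2 * (π * t / 2) := by ring
    have hsq := Real.cos_sq (π * t / 2)
    rw [← harg] at hsq
    have hpy := Real.sin_sq_add_cos_sq (π * t / 2)
    have hsin : Real.sin (π * t / 2) ^ 2 = 1 / 2 - Real.cos (π * t) / 2 := by linarith
    have hdiv : Real.cos (π * t) * π / (2 * π) = Real.cos (π * t) / 2 :=
      mul_div_mul_right _ _ Real.pi_ne_zero
    rw [show (-Real.sin (π * t / 2) * (π / 2)) ^ 2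
        = (π / 2) ^ 2 * Real.sin (π * t / 2) ^ 2 from by ring, hsin]
    rw [hdiv]
  have hcont : Continuous fun t : ℝ => (-Real.sin (π * t / 2) * (π / 2)) ^ 2 :=
    (((Real.continuous_sin.comp (by fun_prop)).neg).mul continuous_const).pow 2
  have hftc := intervalIntegral.integral_eq_sub_of_hasDerivAt
    (f := fun t : ℝ => (π / 2) ^ 2 * (t / 2 - Real.sin (π * t) / (2 * π)))
    (a := -1) (b := 1)
    (fun t _ => hB t)
    (hcont.intervalIntegrable _ _)
  rw [hftc]
  norm_num [Real.sin_pi, Real.sin_neg]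
  ring

/-- The element of the eigenvalue set corresponding to the test function. -/
lemma r0_mem (γ ε : ℝ) :
    (1 / ε ^ 2) * (π / 2) ^ 2 + (∫ t in (-1 : ℝ)..1, Ypot γ ε t * v0 t ^ 2)
      ∈ {r : ℝ | ∃ v : ℝ → ℝ, ContDiff ℝ 1 v ∧ v (-1) = 0 ∧ v 1 = 0 ∧
        (∫ t in (-1 : ℝ)..1, v t ^ 2) = 1 ∧
        r = (1 / ε ^ 2) * (∫ t in (-1 : ℝ)..1, deriv v t ^ 2)
          + ∫ t in (-1 : ℝ)..1, Ypot γ ε t * v t ^ 2} := by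
  refine ⟨v0, v0_contDiff, ?_, ?_, integral_v0_sq, ?_⟩
  · show Real.cos (π * (-1) / 2) = 0
    rw [show π * (-1) / 2 = -(π / 2) by ring, Real.cos_neg, Real.cos_pi_div_two]
  · show Real.cos (π * 1 / 2) = 0
    rw [show π * 1 / 2 = π / 2 by ring, Real.cos_pi_div_two]
  · rw [integral_v0_deriv_sq]

lemma integral_ypot_v0_le (γ ε : ℝ) :
    (∫ t in (-1 : ℝ)..1, Ypot γ ε t * v0 t ^ 2) ≤ γ ^ 2 / 2 := by
  have h1 : (∫ t in (-1 : ℝ)..1, Ypot γ ε t * v0 t ^ 2)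
      ≤ ∫ t in (-1 : ℝ)..1, (γ ^ 2 / 2) * v0 t ^ 2 := by
    apply intervalIntegral.integral_mono_on (by norm_num)
    · exact ((ypot_cont γ ε).mul ((v0_contDiff.continuous).pow 2)).intervalIntegrable _ _
    · exact (continuous_const.mul ((v0_contDiff.continuous).pow 2)).intervalIntegrable _ _
    · intro x _
      exact mul_le_mul_of_nonneg_right (ypot_le γ ε x) (sq_nonneg _)
  rw [intervalIntegral.integral_const_mul, integral_v0_sq] at h1
  linarith

lemma integral_ypot_nonneg {γ ε : ℝ} (hY : ∀ t ∈ Ioo (-1 : ℝ) 1, 0 < Ypot γ ε t)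
    (v : ℝ → ℝ) : 0 ≤ ∫ t in (-1 : ℝ)..1, Ypot γ ε t * v t ^ 2 := by
  apply intervalIntegral.integral_nonneg_of_ae_restrict (by norm_num : (-1:ℝ) ≤ 1)
  have h1 : ∀ᵐ t : ℝ ∂volume, t ≠ 1 ∧ t ≠ -1 := by
    rw [MeasureTheory.ae_iff]
    have : {a : ℝ | ¬(a ≠ 1 ∧ a ≠ -1)} = {1, -1} := by
      ext x; simp [not_and_or, or_comm]; tauto
    rw [this]
    exact measure_union_null (measure_singleton _) (measure_singleton _)
  filter_upwards [ae_restrict_mem measurableSet_Icc, ae_restrict_of_ae h1] with t ht hne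
  have ht' : t ∈ Ioo (-1 : ℝ) 1 :=
    ⟨lt_of_le_of_ne ht.1 (Ne.symm hne.2), lt_of_le_of_ne ht.2 hne.1⟩
  exact mul_nonneg (hY t ht').le (sq_nonneg _)

lemma lam_bounds (γ : ℝ) (ε : ℝ) (hε : 0 < ε)
    (hY : ∀ t ∈ Ioo (-1 : ℝ) 1, 0 < Ypot γ ε t) :
    (π / 2) ^ 2 ≤ ε ^ 2 * lamOne γ ε ∧
      ε ^ 2 * lamOne γ ε ≤ (π / 2) ^ 2 + (γ ^ 2 / 2) * ε ^ 2 := by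
  set S := {r : ℝ | ∃ v : ℝ → ℝ, ContDiff ℝ 1 v ∧ v (-1) = 0 ∧ v 1 = 0 ∧
    (∫ t in (-1 : ℝ)..1, v t ^ 2) = 1 ∧
    r = (1 / ε ^ 2) * (∫ t in (-1 : ℝ)..1, deriv v t ^ 2)
      + ∫ t in (-1 : ℝ)..1, Ypot γ ε t * v t ^ 2} with hS
  have hε2 : (0:ℝ) < ε ^ 2 := by positivity
  have hlow : ∀ r ∈ S, (π / 2) ^ 2 / ε ^ 2 ≤ r := by
    rintro r ⟨v, hv, h1, h2, hnorm, rfl⟩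
    have hw := wirtinger hv h1 h2
    rw [hnorm] at hw
    have hY0 := integral_ypot_nonneg hY v
    have hmul : (1 / ε ^ 2) * ((π / 2) ^ 2 * 1)
        ≤ (1 / ε ^ 2) * (∫ t in (-1 : ℝ)..1, deriv v t ^ 2) :=
      mul_le_mul_of_nonneg_left hw (by positivity)
    have heq : (1 / ε ^ 2) * ((π / 2) ^ 2 * 1) = (π / 2) ^ 2 / ε ^ 2 := by ring
    linarith
  have hne : S.Nonempty := ⟨_, r0_mem γ ε⟩
  have hbdd : BddBelow S := ⟨(π / 2) ^ 2 / ε ^ 2, hlow⟩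
  constructor
  · have h := le_csInf hne hlow
    have := mul_le_mul_of_nonneg_left h hε2.le
    calc (π / 2) ^ 2 = ε ^ 2 * ((π / 2) ^ 2 / ε ^ 2) := by
          field_simp
      _ ≤ ε ^ 2 * lamOne γ ε := this
  · have h := csInf_le hbdd (r0_mem γ ε)
    have hYle := integral_ypot_v0_le γ ε
    have := mul_le_mul_of_nonneg_left h hε2.le
    calc ε ^ 2 * lamOne γ ε
        ≤ ε ^ 2 * ((1 / ε ^ 2) * (π / 2) ^ 2
            + ∫ t in (-1 : ℝ)..1, Ypot γ ε t * v0 t ^ 2) := this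
      _ = (π / 2) ^ 2 + ε ^ 2 * ∫ t in (-1 : ℝ)..1, Ypot γ ε t * v0 t ^ 2 := by
          field_simp
      _ ≤ (π / 2) ^ 2 + (γ ^ 2 / 2) * ε ^ 2 := by nlinarith [hYle, hε2]

end Stmt10Aux

open Stmt10Aux in
/-- Under `Y_ε⁰ > 0` on `(-1,1)`:
`(π/2)² ≤ ε² λ_{ε,1}(0) ≤ (π/2)² + Kε²` with `K` independent of `ε`; in
particular `ε² λ_{ε,1}(0) → (π/2)²` as `ε → 0⁺`. -/
theorem stmt_10 (γ : ℝ) (hγ : 0 < γ) :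
    (∃ K : ℝ, 0 < K ∧ ∀ ε : ℝ, 0 < ε →
      (∀ t ∈ Set.Ioo (-1 : ℝ) 1, 0 < Ypot γ ε t) →
      (Real.pi / 2) ^ 2 ≤ ε ^ 2 * lamOne γ ε ∧
      ε ^ 2 * lamOne γ ε ≤ (Real.pi / 2) ^ 2 + K * ε ^ 2) ∧
    Filter.Tendsto (fun ε => ε ^ 2 * lamOne γ ε)
      (nhdsWithin 0 (Set.Ioi 0)) (nhds ((Real.pi / 2) ^ 2)) := by
  constructor
  · exact ⟨γ ^ 2 / 2, by positivity, fun ε hε hY => lam_bounds γ ε hε hY⟩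
  · have hmem : Ioo (0:ℝ) (1/γ) ∈ nhdsWithin (0:ℝ) (Ioi 0) :=
      Ioo_mem_nhdsGT_of_mem ⟨le_rfl, by positivity⟩
    refine tendsto_of_tendsto_of_tendsto_of_le_of_le'
      (g := fun _ : ℝ => (π / 2) ^ 2)
      (h := fun ε : ℝ => (π / 2) ^ 2 + (γ ^ 2 / 2) * ε ^ 2)
      tendsto_const_nhds ?_ ?_ ?_
    · have hcont : Continuous fun ε : ℝ => (π / 2) ^ 2 + (γ ^ 2 / 2) * ε ^ 2 :=
        continuous_const.add (continuous_const.mul (continuous_pow 2))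
      have := (hcont.tendsto 0).mono_left (nhdsWithin_le_nhds (s := Ioi (0:ℝ)))
      simpa using this
    · filter_upwards [hmem] with ε hε
      exact (lam_bounds γ ε hε.1 (ypot_pos_of_small γ hγ ε hε.1 hε.2)).1
    · filter_upwards [hmem] with ε hε
      exact (lam_bounds γ ε hε.1 (ypot_pos_of_small γ hγ ε hε.1 hε.2)).2
end
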